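/- With the setup parameter δ = 10⁻¹², let Γ be a segment barrier for the unit square U given by segments sᵢ with total length L ≤ 2 + δ. Let Q₂ = {(x, y) ∈ ℝ² : |x − 1/2| + |y − 1/2| ≤ 1} be the square of side length √2 concentric with U and rotated by π/4. Then Σᵢ H¹(sᵢ \ Q₂) ≤ 4δ. -/

import Mathlib

open MeasureTheory Set
open scoped NNReal ENNReal

noncomputable section

/-- A point in the plane. -/
abbrev Pt : Type := EuclideanSpace ℝ (Fin 2)

/-- A line in ℝ² is a set {p + t • v : t ∈ ℝ} for some p, v with v ≠ 0. -/
def IsLine (l : Set Pt) : Prop :=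
  ∃ p v : Pt, v ≠ 0 ∧ l = {q : Pt | ∃ t : ℝ, q = p + t • v}

/-- Γ is a barrier (opaque set) for C if every line meeting C also meets Γ. -/
def IsBarrier (Γ C : Set Pt) : Prop :=
  ∀ l : Set Pt, IsLine l → (l ∩ C).Nonempty → (l ∩ Γ).Nonempty

/-- The closed unit square U = [0,1] × [0,1]. -/
def unitSquare : Set Pt := {p : Pt | p 0 ∈ Icc (0:ℝ) 1 ∧ p 1 ∈ Icc (0:ℝ) 1}

/-- Auxiliary: point constructor for the plane. -/
def pt (x y : ℝ) : Pt := (WithLp.equiv 2 (Fin 2 → ℝ)).symm ![x, y]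

lemma lipOn (c d : ℝ) (a b : Pt) (hab : a ≠ b) :
    LipschitzOnWith (Real.toNNReal (|c * (b 0 - a 0) + d * (b 1 - a 1)| / ‖b - a‖))
      (fun p : Pt => c * p 0 + d * p 1) (segment ℝ a b) := by
  have hℓ : 0 < ‖b - a‖ := by
    rw [norm_pos_iff]; exact sub_ne_zero_of_ne (Ne.symm hab)
  rw [lipschitzOnWith_iff_dist_le_mul]
  intro p hp q hq
  rw [segment_eq_image'] at hp hq
  obtain ⟨s, -, rfl⟩ := hp
  obtain ⟨t, -, rfl⟩ := hq
  have h1 : dist (a + s • (b - a)) (a + t • (b - a)) = |s - t| * ‖b - a‖ := by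
    rw [dist_eq_norm]
    have h2 : a + s • (b - a) - (a + t • (b - a)) = (s - t) • (b - a) := by module
    rw [h2, norm_smul, Real.norm_eq_abs]
  have h3 : c * ((a + s • (b - a)) 0) + d * ((a + s • (b - a)) 1)
      - (c * ((a + t • (b - a)) 0) + d * ((a + t • (b - a)) 1))
      = (s - t) * (c * (b 0 - a 0) + d * (b 1 - a 1)) := by
    show c * (a 0 + s * (b 0 - a 0)) + d * (a 1 + s * (b 1 - a 1))
      - (c * (a 0 + t * (b 0 - a 0)) + d * (a 1 + t * (b 1 - a 1))) = _
    ring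
  rw [Real.dist_eq, h3, h1, abs_mul, Real.coe_toNNReal _ (by positivity)]
  rw [div_mul_eq_mul_div, le_div_iff₀ hℓ]
  ring_nf
  exact le_refl _

lemma cover1 {Γ : Set Pt} (hbar : IsBarrier Γ unitSquare) :
    Icc (0:ℝ) 2 ⊆ (fun p : Pt => p 0 + p 1) '' Γ := by
  rintro r ⟨hr0, hr2⟩
  have hv : pt 1 (-1) ≠ 0 := by
    intro h
    have h0 : (1:ℝ) = 0 := congrArg (fun f : Pt => f 0) h
    exact one_ne_zero h0
  have hmem : pt (r/2) (r/2) ∈ unitSquare := by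
    constructor <;> (rw [mem_Icc]; constructor) <;>
      first
      | (show (0:ℝ) ≤ r/2; linarith)
      | (show r/2 ≤ (1:ℝ); linarith)
  obtain ⟨q, hql, hqΓ⟩ := hbar {q : Pt | ∃ t : ℝ, q = pt (r/2) (r/2) + t • pt 1 (-1)}
    ⟨_, _, hv, rfl⟩ ⟨pt (r/2) (r/2), ⟨0, by simp⟩, hmem⟩
  obtain ⟨t, rfl⟩ := hql
  refine ⟨_, hqΓ, ?_⟩
  show (r/2 + t * 1) + (r/2 + t * (-1)) = r
  ring

lemma cover2 {Γ : Set Pt} (hbar : IsBarrier Γ unitSquare) :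
    Icc (-1:ℝ) 1 ⊆ (fun p : Pt => p 0 - p 1) '' Γ := by
  rintro r ⟨hr0, hr2⟩
  have hv : pt 1 1 ≠ 0 := by
    intro h
    have h0 : (1:ℝ) = 0 := congrArg (fun f : Pt => f 0) h
    exact one_ne_zero h0
  have hmem : pt ((1+r)/2) ((1-r)/2) ∈ unitSquare := by
    constructor <;> (rw [mem_Icc]; constructor) <;>
      first
      | (show (0:ℝ) ≤ (1+r)/2; linarith)
      | (show (1+r)/2 ≤ (1:ℝ); linarith)
      | (show (0:ℝ) ≤ (1-r)/2; linarith)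
      | (show (1-r)/2 ≤ (1:ℝ); linarith)
  obtain ⟨q, hql, hqΓ⟩ := hbar {q : Pt | ∃ t : ℝ, q = pt ((1+r)/2) ((1-r)/2) + t • pt 1 1}
    ⟨_, _, hv, rfl⟩ ⟨pt ((1+r)/2) ((1-r)/2), ⟨0, by simp⟩, hmem⟩
  obtain ⟨t, rfl⟩ := hql
  refine ⟨_, hqΓ, ?_⟩
  show ((1+r)/2 + t * 1) - ((1-r)/2 + t * 1) = r
  ring

lemma key_real (x0 x1 L : ℝ) (hL : 0 < L) (hsq : x0^2 + x1^2 = L^2) :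
    |1*x0 + 1*x1| / L ≤ Real.sqrt 2 ∧ |1*x0 + (-1)*x1| / L ≤ Real.sqrt 2 ∧
    |1*x0 + 1*x1| / L + |1*x0 + (-1)*x1| / L ≤ 2 := by
  have sqrt_bound : ∀ s : ℝ, s^2 ≤ 2 * L^2 → |s| ≤ Real.sqrt 2 * L := by
    intro s hs
    calc |s| = Real.sqrt (s^2) := (Real.sqrt_sq_eq_abs _).symm
      _ ≤ Real.sqrt (2 * L^2) := Real.sqrt_le_sqrt hs
      _ = Real.sqrt 2 * L := by rw [Real.sqrt_mul (by norm_num : (0:ℝ) ≤ 2), Real.sqrt_sq hL.le]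
  refine ⟨?_, ?_, ?_⟩
  · rw [div_le_iff₀ hL]
    exact sqrt_bound _ (by nlinarith [sq_nonneg (x0 - x1)])
  · rw [div_le_iff₀ hL]
    exact sqrt_bound _ (by nlinarith [sq_nonneg (x0 + x1)])
  · rw [← add_div, div_le_iff₀ hL]
    rcases abs_cases (1*x0+1*x1) with ⟨e1,-⟩|⟨e1,-⟩ <;>
      rcases abs_cases (1*x0+(-1)*x1) with ⟨e2,-⟩|⟨e2,-⟩ <;>
      rw [e1, e2] <;>
      nlinarith [sq_nonneg x0, sq_nonneg x1, sq_nonneg (x0-L), sq_nonneg (x0+L),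
        sq_nonneg (x1-L), sq_nonneg (x1+L)]

lemma norm_sq_pt (x : Pt) : (x 0)^2 + (x 1)^2 = ‖x‖^2 := by
  rw [EuclideanSpace.norm_eq, Real.sq_sqrt (by positivity)]
  simp [Fin.sum_univ_two]

/-- Lemma 7: for a segment barrier of the unit square of total length at most
2 + δ (δ = 10⁻¹²), the total length of the parts of the segments outside the rotated square
Q₂ = {(x,y) : |x − 1/2| + |y − 1/2| ≤ 1} is at most 4δ. -/
theorem barrier_outside_Q2_small
    (a b : ℕ → Pt) (hab : ∀ i, a i ≠ b i)
    (hbar : IsBarrier (⋃ i, segment ℝ (a i) (b i)) unitSquare)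
    (hsum : Summable fun i => ‖b i - a i‖)
    (hL : ∑' i, ‖b i - a i‖ ≤ 2 + 10 ^ (-12 : ℤ)) :
    ∑' i, μH[1] (segment ℝ (a i) (b i) \ {p : Pt | |p 0 - 1/2| + |p 1 - 1/2| ≤ 1})
      ≤ ENNReal.ofReal (4 * 10 ^ (-12 : ℤ)) := by
  set Q₂ : Set Pt := {p : Pt | |p 0 - 1/2| + |p 1 - 1/2| ≤ 1} with hQ₂def
  set S₁ : Set Pt := (fun p : Pt => p 0 + p 1) ⁻¹' Icc (0:ℝ) 2 with hS₁def
  set S₂ : Set Pt := (fun p : Pt => p 0 - p 1) ⁻¹' Icc (-1:ℝ) 1 with hS₂def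
  set seg : ℕ → Set Pt := fun i => segment ℝ (a i) (b i) with hsegdef
  have hQ : Q₂ = S₁ ∩ S₂ := by
    ext p
    simp only [hQ₂def, hS₁def, hS₂def, mem_setOf_eq, mem_inter_iff, mem_preimage, mem_Icc]
    constructor
    · intro h
      rcases abs_cases (p 0 - 1/2) with ⟨h1, h1'⟩ | ⟨h1, h1'⟩ <;>
        rcases abs_cases (p 1 - 1/2) with ⟨h2, h2'⟩ | ⟨h2, h2'⟩ <;>
        exact ⟨⟨by linarith, by linarith⟩, by linarith, by linarith⟩
    · rintro ⟨⟨h1, h2⟩, h3, h4⟩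
      rcases abs_cases (p 0 - 1/2) with ⟨e1, -⟩ | ⟨e1, -⟩ <;>
        rcases abs_cases (p 1 - 1/2) with ⟨e2, -⟩ | ⟨e2, -⟩ <;> linarith
  have hQS₁ : Q₂ ⊆ S₁ := hQ ▸ inter_subset_left
  have hQS₂ : Q₂ ⊆ S₂ := hQ ▸ inter_subset_right
  have mS₁ : MeasurableSet S₁ :=
    (((EuclideanSpace.proj (0:Fin 2) : Pt →L[ℝ] ℝ).continuous.add
      (EuclideanSpace.proj (1:Fin 2)).continuous).measurable) measurableSet_Icc
  have mS₂ : MeasurableSet S₂ :=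
    (((EuclideanSpace.proj (0:Fin 2) : Pt →L[ℝ] ℝ).continuous.sub
      (EuclideanSpace.proj (1:Fin 2)).continuous).measurable) measurableSet_Icc
  have mQ : MeasurableSet Q₂ := by rw [hQ]; exact mS₁.inter mS₂
  have msegc : ∀ i, IsCompact (seg i) := fun i => by
    show IsCompact (segment ℝ (a i) (b i))
    rw [segment_eq_image']
    exact isCompact_Icc.image (by continuity)
  have mseg : ∀ i, MeasurableSet (seg i) := fun i => (msegc i).isClosed.measurableSet
  set K : ℕ → ℝ≥0 := fun i =>
    Real.toNNReal (|1 * (b i 0 - a i 0) + 1 * (b i 1 - a i 1)| / ‖b i - a i‖) with hKdef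
  set M : ℕ → ℝ≥0 := fun i =>
    Real.toNNReal (|1 * (b i 0 - a i 0) + (-1) * (b i 1 - a i 1)| / ‖b i - a i‖) with hMdef
  -- coverage lower bounds
  have himg1 : Icc (0:ℝ) 2 ⊆ ⋃ i, (fun p : Pt => p 0 + p 1) '' (seg i ∩ S₁) := by
    intro r hr
    obtain ⟨q, hqΓ, hq⟩ := cover1 hbar hr
    obtain ⟨i, hi⟩ := mem_iUnion.mp hqΓ
    have hq' : q 0 + q 1 = r := hq
    refine mem_iUnion.mpr ⟨i, ⟨q, ⟨hi, ?_⟩, hq⟩⟩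
    show q 0 + q 1 ∈ Icc (0:ℝ) 2
    rw [hq']; exact hr
  have himg2 : Icc (-1:ℝ) 1 ⊆ ⋃ i, (fun p : Pt => p 0 - p 1) '' (seg i ∩ S₂) := by
    intro r hr
    obtain ⟨q, hqΓ, hq⟩ := cover2 hbar hr
    obtain ⟨i, hi⟩ := mem_iUnion.mp hqΓ
    have hq' : q 0 - q 1 = r := hq
    refine mem_iUnion.mpr ⟨i, ⟨q, ⟨hi, ?_⟩, hq⟩⟩
    show q 0 - q 1 ∈ Icc (-1:ℝ) 1
    rw [hq']; exact hr
  have h1 : ENNReal.ofReal 2 ≤ ∑' i, (K i : ℝ≥0∞) * μH[1] (seg i ∩ S₁) := by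
    calc ENNReal.ofReal 2 = volume (Icc (0:ℝ) 2) := by rw [Real.volume_Icc]; norm_num
      _ ≤ volume (⋃ i, (fun p : Pt => p 0 + p 1) '' (seg i ∩ S₁)) := measure_mono himg1
      _ ≤ ∑' i, volume ((fun p : Pt => p 0 + p 1) '' (seg i ∩ S₁)) := measure_iUnion_le _
      _ ≤ ∑' i, (K i : ℝ≥0∞) * μH[1] (seg i ∩ S₁) := by
          refine ENNReal.tsum_le_tsum fun i => ?_
          have hl := ((lipOn 1 1 (a i) (b i) (hab i)).mono
            (inter_subset_left : seg i ∩ S₁ ⊆ seg i)).hausdorffMeasure_image_le zero_le_one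
          have hfun : (fun p : Pt => 1 * p 0 + 1 * p 1) = fun p : Pt => p 0 + p 1 := by
            funext p; ring
          rw [hfun, ENNReal.rpow_one] at hl
          rw [← MeasureTheory.hausdorffMeasure_real]
          exact hl
  have h2 : ENNReal.ofReal 2 ≤ ∑' i, (M i : ℝ≥0∞) * μH[1] (seg i ∩ S₂) := by
    calc ENNReal.ofReal 2 = volume (Icc (-1:ℝ) 1) := by rw [Real.volume_Icc]; norm_num
      _ ≤ volume (⋃ i, (fun p : Pt => p 0 - p 1) '' (seg i ∩ S₂)) := measure_mono himg2
      _ ≤ ∑' i, volume ((fun p : Pt => p 0 - p 1) '' (seg i ∩ S₂)) := measure_iUnion_le _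
      _ ≤ ∑' i, (M i : ℝ≥0∞) * μH[1] (seg i ∩ S₂) := by
          refine ENNReal.tsum_le_tsum fun i => ?_
          have hl := ((lipOn 1 (-1) (a i) (b i) (hab i)).mono
            (inter_subset_left : seg i ∩ S₂ ⊆ seg i)).hausdorffMeasure_image_le zero_le_one
          have hfun : (fun p : Pt => 1 * p 0 + (-1) * p 1) = fun p : Pt => p 0 - p 1 := by
            funext p; ring
          rw [hfun, ENNReal.rpow_one] at hl
          rw [← MeasureTheory.hausdorffMeasure_real]
          exact hl
  -- per-segment key inequality
  have key : ∀ i, (K i : ℝ≥0∞) * μH[1] (seg i ∩ S₁) + (M i : ℝ≥0∞) * μH[1] (seg i ∩ S₂)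
      ≤ 2 * μH[1] (seg i ∩ Q₂) + ENNReal.ofReal (Real.sqrt 2) * μH[1] (seg i \ Q₂) := by
    intro i
    have hLpos : 0 < ‖b i - a i‖ := by
      rw [norm_pos_iff]; exact sub_ne_zero_of_ne (Ne.symm (hab i))
    have hsq : (b i 0 - a i 0)^2 + (b i 1 - a i 1)^2 = ‖b i - a i‖^2 := by
      exact norm_sq_pt (b i - a i)
    obtain ⟨hKb, hMb, hKMb⟩ := key_real _ _ _ hLpos hsq
    have hK2 : (K i : ℝ≥0∞) ≤ ENNReal.ofReal (Real.sqrt 2) := ENNReal.ofReal_le_ofReal hKb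
    have hM2 : (M i : ℝ≥0∞) ≤ ENNReal.ofReal (Real.sqrt 2) := ENNReal.ofReal_le_ofReal hMb
    have hKM : (K i : ℝ≥0∞) + (M i : ℝ≥0∞) ≤ 2 := by
      have h' : (K i : ℝ≥0∞) + (M i : ℝ≥0∞) ≤ ENNReal.ofReal 2 := by
        have : ENNReal.ofReal (|1 * (b i 0 - a i 0) + 1 * (b i 1 - a i 1)| / ‖b i - a i‖
            + |1 * (b i 0 - a i 0) + (-1) * (b i 1 - a i 1)| / ‖b i - a i‖) ≤ ENNReal.ofReal 2 :=
          ENNReal.ofReal_le_ofReal hKMb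
        rw [ENNReal.ofReal_add (by positivity) (by positivity)] at this
        exact this
      calc (K i : ℝ≥0∞) + (M i : ℝ≥0∞) ≤ ENNReal.ofReal 2 := h'
        _ = 2 := by norm_num
    have e1 : μH[1] (seg i ∩ S₁) = μH[1] (seg i ∩ Q₂) + μH[1] ((seg i ∩ S₁) \ Q₂) := by
      rw [← measure_inter_add_diff (seg i ∩ S₁) mQ]
      congr 2
      rw [inter_assoc, inter_eq_self_of_subset_right hQS₁]
    have e2 : μH[1] (seg i ∩ S₂) = μH[1] (seg i ∩ Q₂) + μH[1] ((seg i ∩ S₂) \ Q₂) := by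
      rw [← measure_inter_add_diff (seg i ∩ S₂) mQ]
      congr 2
      rw [inter_assoc, inter_eq_self_of_subset_right hQS₂]
    have hβ : μH[1] ((seg i ∩ S₁) \ Q₂) + μH[1] ((seg i ∩ S₂) \ Q₂) ≤ μH[1] (seg i \ Q₂) := by
      have hdisj : Disjoint ((seg i ∩ S₁) \ Q₂) ((seg i ∩ S₂) \ Q₂) := by
        rw [disjoint_left]
        rintro x ⟨⟨hxs, hx1⟩, hxq⟩ ⟨⟨-, hx2⟩, -⟩
        exact hxq (by rw [hQ]; exact ⟨hx1, hx2⟩)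
      have hsub : ((seg i ∩ S₁) \ Q₂) ∪ ((seg i ∩ S₂) \ Q₂) ⊆ seg i \ Q₂ := by
        rintro x (⟨⟨hs, -⟩, hq⟩ | ⟨⟨hs, -⟩, hq⟩) <;> exact ⟨hs, hq⟩
      calc μH[1] ((seg i ∩ S₁) \ Q₂) + μH[1] ((seg i ∩ S₂) \ Q₂)
          = μH[1] (((seg i ∩ S₁) \ Q₂) ∪ ((seg i ∩ S₂) \ Q₂)) :=
            (measure_union hdisj (((mseg i).inter mS₂).diff mQ)).symm
        _ ≤ μH[1] (seg i \ Q₂) := measure_mono hsub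
    rw [e1, e2, mul_add, mul_add]
    calc (K i : ℝ≥0∞) * μH[1] (seg i ∩ Q₂) + (K i : ℝ≥0∞) * μH[1] ((seg i ∩ S₁) \ Q₂)
          + ((M i : ℝ≥0∞) * μH[1] (seg i ∩ Q₂) + (M i : ℝ≥0∞) * μH[1] ((seg i ∩ S₂) \ Q₂))
        = ((K i : ℝ≥0∞) + (M i : ℝ≥0∞)) * μH[1] (seg i ∩ Q₂)
          + ((K i : ℝ≥0∞) * μH[1] ((seg i ∩ S₁) \ Q₂)
            + (M i : ℝ≥0∞) * μH[1] ((seg i ∩ S₂) \ Q₂)) := by ring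
      _ ≤ 2 * μH[1] (seg i ∩ Q₂)
          + (ENNReal.ofReal (Real.sqrt 2) * μH[1] ((seg i ∩ S₁) \ Q₂)
            + ENNReal.ofReal (Real.sqrt 2) * μH[1] ((seg i ∩ S₂) \ Q₂)) := by
          gcongr
      _ = 2 * μH[1] (seg i ∩ Q₂)
          + ENNReal.ofReal (Real.sqrt 2)
            * (μH[1] ((seg i ∩ S₁) \ Q₂) + μH[1] ((seg i ∩ S₂) \ Q₂)) := by ring
      _ ≤ 2 * μH[1] (seg i ∩ Q₂) + ENNReal.ofReal (Real.sqrt 2) * μH[1] (seg i \ Q₂) := by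
          gcongr
  -- summation
  have hsum_key : ENNReal.ofReal 4
      ≤ 2 * (∑' i, μH[1] (seg i ∩ Q₂))
        + ENNReal.ofReal (Real.sqrt 2) * (∑' i, μH[1] (seg i \ Q₂)) := by
    calc ENNReal.ofReal 4 = ENNReal.ofReal 2 + ENNReal.ofReal 2 := by
          rw [← ENNReal.ofReal_add] <;> norm_num
      _ ≤ (∑' i, (K i : ℝ≥0∞) * μH[1] (seg i ∩ S₁))
          + (∑' i, (M i : ℝ≥0∞) * μH[1] (seg i ∩ S₂)) := add_le_add h1 h2
      _ = ∑' i, ((K i : ℝ≥0∞) * μH[1] (seg i ∩ S₁) + (M i : ℝ≥0∞) * μH[1] (seg i ∩ S₂)) :=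
          ENNReal.tsum_add.symm
      _ ≤ ∑' i, (2 * μH[1] (seg i ∩ Q₂) + ENNReal.ofReal (Real.sqrt 2) * μH[1] (seg i \ Q₂)) :=
          ENNReal.tsum_le_tsum key
      _ = _ := by rw [ENNReal.tsum_add, ENNReal.tsum_mul_left, ENNReal.tsum_mul_left]
  have hAB : (∑' i, μH[1] (seg i ∩ Q₂)) + (∑' i, μH[1] (seg i \ Q₂))
      ≤ ENNReal.ofReal (2 + 10 ^ (-12 : ℤ)) := by
    rw [← ENNReal.tsum_add]
    have hlen : ∀ i, μH[1] (seg i ∩ Q₂) + μH[1] (seg i \ Q₂) = ENNReal.ofReal ‖b i - a i‖ := by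
      intro i
      rw [measure_inter_add_diff (seg i) mQ]
      show μH[1] (segment ℝ (a i) (b i)) = _
      rw [MeasureTheory.hausdorffMeasure_segment, edist_dist, dist_eq_norm, norm_sub_rev]
    calc ∑' i, (μH[1] (seg i ∩ Q₂) + μH[1] (seg i \ Q₂))
        = ∑' i, ENNReal.ofReal ‖b i - a i‖ := tsum_congr hlen
      _ = ENNReal.ofReal (∑' i, ‖b i - a i‖) :=
          (ENNReal.ofReal_tsum_of_nonneg (fun i => norm_nonneg _) hsum).symm
      _ ≤ _ := ENNReal.ofReal_le_ofReal hL
  -- finiteness and passage to reals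
  set A : ℝ≥0∞ := ∑' i, μH[1] (seg i ∩ Q₂) with hAdef
  set B : ℝ≥0∞ := ∑' i, μH[1] (seg i \ Q₂) with hBdef
  have hAfin : A ≠ ⊤ := ne_top_of_le_ne_top ENNReal.ofReal_ne_top (le_trans le_self_add hAB)
  have hBfin : B ≠ ⊤ := ne_top_of_le_ne_top ENNReal.ofReal_ne_top (le_trans le_add_self hAB)
  have hy0 : (0:ℝ) ≤ B.toReal := ENNReal.toReal_nonneg
  have hxy : A.toReal + B.toReal ≤ 2 + 10 ^ (-12 : ℤ) := by
    have h' := ENNReal.toReal_mono ENNReal.ofReal_ne_top hAB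
    rwa [ENNReal.toReal_add hAfin hBfin, ENNReal.toReal_ofReal (by positivity)] at h'
  have h4 : (4:ℝ) ≤ 2 * A.toReal + Real.sqrt 2 * B.toReal := by
    have hfin : 2 * A + ENNReal.ofReal (Real.sqrt 2) * B ≠ ⊤ :=
      ENNReal.add_ne_top.mpr ⟨ENNReal.mul_ne_top (by norm_num) hAfin,
        ENNReal.mul_ne_top ENNReal.ofReal_ne_top hBfin⟩
    have h' := ENNReal.toReal_mono hfin hsum_key
    rwa [ENNReal.toReal_ofReal (by norm_num : (0:ℝ) ≤ 4),
      ENNReal.toReal_add (ENNReal.mul_ne_top (by norm_num) hAfin)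
        (ENNReal.mul_ne_top ENNReal.ofReal_ne_top hBfin),
      ENNReal.toReal_mul, ENNReal.toReal_mul,
      ENNReal.toReal_ofReal (Real.sqrt_nonneg 2), ENNReal.toReal_ofNat] at h'
  have hs15 : Real.sqrt 2 ≤ 1.5 := by
    nlinarith [Real.sq_sqrt (by norm_num : (0:ℝ) ≤ 2), Real.sqrt_nonneg 2]
  have hsy : Real.sqrt 2 * B.toReal ≤ 1.5 * B.toReal :=
    mul_le_mul_of_nonneg_right hs15 hy0
  have hy4 : B.toReal ≤ 4 * 10 ^ (-12 : ℤ) := by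
    have hδ : (0:ℝ) < 10 ^ (-12 : ℤ) := by positivity
    linarith
  show B ≤ ENNReal.ofReal (4 * 10 ^ (-12 : ℤ))
  calc B = ENNReal.ofReal B.toReal := (ENNReal.ofReal_toReal hBfin).symm
    _ ≤ _ := ENNReal.ofReal_le_ofReal hy4
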